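/- Let A ∈ R^{n×n} be semimonotone, let z, w > 0 in R^n, and let κ > max(n, zᵀw/min_i(z_i w_i)). With ψ(z,w) = κ·log(zᵀw) − Σ_i log(z_i w_i), the vector r = ∇_z ψ + Aᵀ ∇_w ψ is nonzero. -/

import Mathlib

/-- A is semimonotone (E₀). -/
def IsSemimonotone {n : ℕ} (A : Matrix (Fin n) (Fin n) ℝ) : Prop :=
  ∀ x : Fin n → ℝ, 0 ≤ x → x ≠ 0 → ∃ i, 0 < x i ∧ 0 ≤ A.mulVec x i


open Finset

lemma ville_alt {n : ℕ} (M : Matrix (Fin n) (Fin n) ℝ) (β : Finset (Fin n)) (hβ : β.Nonempty)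
    (h : ∀ x : Fin n → ℝ, 0 ≤ x → x ≠ 0 → (∀ i, x i ≠ 0 → i ∈ β) →
      ∃ i ∈ β, 0 ≤ M.mulVec x i) :
    ∃ y : Fin n → ℝ, 0 ≤ y ∧ y ≠ 0 ∧ (∀ i, y i ≠ 0 → i ∈ β) ∧
      ∀ i ∈ β, 0 ≤ M.transpose.mulVec y i := by
  by_contra hy
  push_neg at hy
  -- hy : ∀ y, 0 ≤ y → y ≠ 0 → (∀ i, y i ≠ 0 → i ∈ β) → ∃ i ∈ β, M.transpose.mulVec y i < 0
  classical
  -- the restricted simplex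
  set Δ : Set (Fin n → ℝ) := stdSimplex ℝ (Fin n) ∩ {a | ∀ i ∉ β, a i = 0} with hΔ
  have hΔconv : Convex ℝ Δ := by
    refine (convex_stdSimplex ℝ _).inter ?_
    intro a ha b hb s t hs ht hst
    intro i hi
    simp only [Set.mem_setOf_eq] at ha hb ⊢
    simp [Pi.add_apply, Pi.smul_apply, ha i hi, hb i hi]
  have hΔcomp : IsCompact Δ := by
    refine (isCompact_stdSimplex _ _).inter_right ?_
    have : {a : Fin n → ℝ | ∀ i ∉ β, a i = 0} = ⋂ (i : Fin n) (_ : i ∉ β), {a | a i = 0} := by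
      ext a; simp
    rw [this]
    exact isClosed_iInter fun i => isClosed_iInter fun _ =>
      isClosed_eq (continuous_apply i) continuous_const
  -- the image of the simplex under transpose multiplication
  set L : (Fin n → ℝ) →L[ℝ] (Fin n → ℝ) :=
    LinearMap.toContinuousLinearMap (Matrix.mulVecLin M.transpose) with hL
  set P : Set (Fin n → ℝ) := L '' Δ with hP
  have hPconv : Convex ℝ P := hΔconv.linear_image (L : (Fin n → ℝ) →ₗ[ℝ] (Fin n → ℝ))
  have hPcomp : IsCompact P := hΔcomp.image L.continuous
  set Q : Set (Fin n → ℝ) := {q | ∀ i ∈ β, 0 ≤ q i} with hQ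
  have hQconv : Convex ℝ Q := by
    intro a ha b hb s t hs ht hst i hi
    have := ha i hi; have := hb i hi
    simp only [Pi.add_apply, Pi.smul_apply, smul_eq_mul]
    positivity
  have hQclosed : IsClosed Q := by
    have : Q = ⋂ (i : Fin n) (_ : i ∈ β), {q : Fin n → ℝ | 0 ≤ q i} := by ext q; simp [hQ]
    rw [this]
    exact isClosed_iInter fun i => isClosed_iInter fun _ =>
      isClosed_le continuous_const (continuous_apply i)
  have hdisj : Disjoint P Q := by
    rw [Set.disjoint_left]
    rintro p ⟨a, ⟨⟨ha0, ha1⟩, hasupp⟩, rfl⟩ hpQ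
    have hane : a ≠ 0 := by
      intro h0
      rw [h0] at ha1
      simp at ha1
    obtain ⟨i, hiβ, hineg⟩ := hy a (fun i => ha0 i) hane (fun i hi => by
      by_contra hmem; exact hi (hasupp i hmem))
    have : 0 ≤ M.transpose.mulVec a i := hpQ i hiβ
    linarith
  obtain ⟨f, u, v, hfP, huv, hfQ⟩ :=
    geometric_hahn_banach_compact_closed hPconv hPcomp hQconv hQclosed hdisj
  -- basic facts about the separator
  have h0Q : (0 : Fin n → ℝ) ∈ Q := fun i _ => le_refl 0
  have hv0 : v < 0 := by have := hfQ 0 h0Q; simpa using this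
  have hu0 : u < 0 := lt_trans huv hv0
  have hfQnonneg : ∀ q ∈ Q, 0 ≤ f q := by
    intro q hq
    by_contra hneg
    push_neg at hneg
    have ht : (0:ℝ) < (v - 1) / f q := by
      apply div_pos_of_neg_of_neg <;> linarith
    have htq : ((v - 1) / f q) • q ∈ Q := by
      intro i hi
      simp only [Pi.smul_apply, smul_eq_mul]
      exact mul_nonneg ht.le (hq i hi)
    have := hfQ _ htq
    rw [map_smul, smul_eq_mul, div_mul_cancel₀ _ (ne_of_lt hneg)] at this
    linarith
  -- the separating vector
  set x : Fin n → ℝ := fun j => f (fun k => if j = k then 1 else 0) with hx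
  have hfrepr : ∀ p : Fin n → ℝ, f p = ∑ j, p j * x j := by
    intro p
    have hp : p = ∑ j, p j • fun k => if j = k then (1:ℝ) else 0 := pi_eq_sum_univ p
    calc f p = f (∑ j, p j • fun k => if j = k then (1:ℝ) else 0) := by rw [← hp]
    _ = ∑ j, p j * x j := by rw [map_sum]; simp [hx]
  have hxnonneg : 0 ≤ x := by
    intro j
    have : (fun k => if j = k then (1:ℝ) else 0) ∈ Q := fun i _ => by positivity
    simpa [hx] using hfQnonneg _ this
  have hxsupp : ∀ j, j ∉ β → x j = 0 := by
    intro j hj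
    have hmem : (-(fun k => if j = k then (1:ℝ) else 0) : Fin n → ℝ) ∈ Q := by
      intro i hi
      have : j ≠ i := fun h => hj (h ▸ hi)
      simp [this]
    have h1 := hfQnonneg _ hmem
    rw [map_neg] at h1
    have h2 : (0:ℝ) ≤ x j := by simpa using hxnonneg j
    have h3 : x j ≤ 0 := by simpa [hx] using h1
    linarith
  -- evaluate on vertices of the simplex
  have hMx : ∀ i ∈ β, M.mulVec x i < 0 := by
    intro i hi
    have hei : (fun k => if i = k then (1:ℝ) else 0) ∈ Δ := by
      constructor
      · constructor
        · intro k; positivity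
        · simp
      · intro k hk
        have : i ≠ k := fun h => hk (h ▸ hi)
        simp [this]
    have hLi := hfP _ ⟨_, hei, rfl⟩
    have hLval : (L (fun k => if i = k then (1:ℝ) else 0)) = fun j => M i j := by
      funext j
      simp only [hL, LinearMap.coe_toContinuousLinearMap', Matrix.mulVecLin_apply]
      simp [Matrix.mulVec, dotProduct, Matrix.transpose_apply, mul_ite, eq_comm]
    rw [hLval, hfrepr] at hLi
    have : Matrix.mulVec M x i = ∑ j, M i j * x j := rfl
    rw [this]
    linarith
  have hxne : x ≠ 0 := by
    intro h0
    obtain ⟨i, hi⟩ := hβ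
    have := hMx i hi
    rw [h0] at this
    simp [Matrix.mulVec_zero] at this
  obtain ⟨i, hiβ, hge⟩ := h x hxnonneg hxne (fun i hxi => by
    by_contra hmem; exact hxi (hxsupp i hmem))
  exact absurd hge (not_le.mpr (hMx i hiβ))

open Finset in
lemma transpose_semi {n : ℕ} (A : Matrix (Fin n) (Fin n) ℝ) (hA : IsSemimonotone A) :
    ∀ k : ℕ, ∀ u : Fin n → ℝ, 0 ≤ u → u ≠ 0 →
      (Finset.univ.filter fun i => u i ≠ 0).card ≤ k →
      ∃ i, 0 < u i ∧ 0 ≤ A.transpose.mulVec u i := by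
  classical
  intro k
  induction k with
  | zero =>
    intro u hu hune hcard
    exfalso
    apply hune
    funext i
    have : (Finset.univ.filter fun i => u i ≠ 0) = ∅ := Finset.card_eq_zero.mp (Nat.le_zero.mp hcard)
    by_contra hne
    have hne' : u i ≠ 0 := by simpa using hne
    have : i ∈ (Finset.univ.filter fun i => u i ≠ 0) := by simp [hne']
    simp_all
  | succ k ih =>
    intro u hu hune hcard
    by_contra hc
    push_neg at hc
    set β : Finset (Fin n) := Finset.univ.filter fun i => u i ≠ 0 with hβdef
    have hupos : ∀ i ∈ β, 0 < u i := by
      intro i hi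
      rw [hβdef, Finset.mem_filter] at hi
      exact lt_of_le_of_ne (hu i) (Ne.symm hi.2)
    have hβne : β.Nonempty := by
      rcases Function.ne_iff.mp hune with ⟨i, hi⟩
      have hi' : u i ≠ 0 := by simpa using hi
      exact ⟨i, by simp [hβdef, hi']⟩
    have hneg : ∀ i ∈ β, A.transpose.mulVec u i < 0 := by
      intro i hi
      exact hc i (hupos i hi)
    -- apply Ville's alternative
    obtain ⟨y, hy0, hyne, hysupp, hynn⟩ := ville_alt A β hβne (by
      intro x hx0 hxne hxsupp
      obtain ⟨i, hxi, hAxi⟩ := hA x hx0 hxne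
      exact ⟨i, hxsupp i (ne_of_gt hxi), hAxi⟩)
    -- the ratio
    set γ : Finset (Fin n) := Finset.univ.filter fun i => y i ≠ 0 with hγdef
    have hγne : γ.Nonempty := by
      rcases Function.ne_iff.mp hyne with ⟨i, hi⟩
      have hi' : y i ≠ 0 := by simpa using hi
      exact ⟨i, by simp [hγdef, hi']⟩
    have hγβ : ∀ i ∈ γ, i ∈ β := by
      intro i hi
      rw [hγdef, Finset.mem_filter] at hi
      exact hysupp i hi.2
    have hypos : ∀ i ∈ γ, 0 < y i := by
      intro i hi
      rw [hγdef, Finset.mem_filter] at hi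
      exact lt_of_le_of_ne (hy0 i) (Ne.symm hi.2)
    set s : ℝ := γ.inf' hγne fun i => u i / y i with hsdef
    have hspos : 0 < s := by
      rw [hsdef, Finset.lt_inf'_iff]
      intro i hi
      exact div_pos (hupos i (hγβ i hi)) (hypos i hi)
    set u' : Fin n → ℝ := fun i => u i - s * y i with hu'def
    have hu'nonneg : 0 ≤ u' := by
      intro i
      simp only [hu'def, Pi.zero_apply]
      by_cases hyi : y i = 0
      · simp [hyi]; exact hu i
      · have hiγ : i ∈ γ := by simp [hγdef, hyi]
        have hle : s ≤ u i / y i := Finset.inf'_le _ hiγ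
        have := hypos i hiγ
        rw [le_div_iff₀ this] at hle
        linarith
    have hu'supp : ∀ i, u' i ≠ 0 → i ∈ β := by
      intro i hi
      by_cases hyi : y i = 0
      · have : u' i = u i := by simp [hu'def, hyi]
        rw [this] at hi
        simp [hβdef, hi]
      · exact hγβ i (by simp [hγdef, hyi])
    -- u' vanishes at the argmin
    obtain ⟨i₀, hi₀γ, hi₀⟩ := Finset.exists_mem_eq_inf' hγne fun i => u i / y i
    have hu'i₀ : u' i₀ = 0 := by
      have hy₀ := hypos i₀ hi₀γ
      have hs : s = u i₀ / y i₀ := hi₀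
      simp only [hu'def]
      rw [hs, div_mul_cancel₀ _ (ne_of_gt hy₀)]
      ring
    -- negativity propagates
    have hu'neg : ∀ i ∈ β, A.transpose.mulVec u' i < 0 := by
      intro i hi
      have hlin : A.transpose.mulVec u' i
          = A.transpose.mulVec u i - s * A.transpose.mulVec y i := by
        simp only [hu'def, Matrix.mulVec, dotProduct]
        rw [Finset.mul_sum, ← Finset.sum_sub_distrib]
        exact Finset.sum_congr rfl fun j _ => by ring
      rw [hlin]
      have h1 := hneg i hi
      have h2 := hynn i hi
      nlinarith
    have hu'ne : u' ≠ 0 := by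
      intro h0
      obtain ⟨i, hi⟩ := hβne
      have heq : ∀ j, u j = s * y j := by
        intro j
        have := congrFun h0 j
        simp only [hu'def, Pi.zero_apply] at this
        linarith
      have hlin : A.transpose.mulVec u i = s * A.transpose.mulVec y i := by
        simp only [Matrix.mulVec, dotProduct]
        rw [Finset.mul_sum]
        exact Finset.sum_congr rfl fun j _ => by rw [heq j]; ring
      have h1 := hneg i hi
      have h2 := hynn i hi
      nlinarith
    -- support strictly decreased
    have hcard' : (Finset.univ.filter fun i => u' i ≠ 0).card ≤ k := by
      have hsub : (Finset.univ.filter fun i => u' i ≠ 0) ⊆ β.erase i₀ := by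
        intro i hi
        rw [Finset.mem_filter] at hi
        refine Finset.mem_erase.mpr ⟨?_, hu'supp i hi.2⟩
        intro h
        exact hi.2 (h ▸ hu'i₀)
      have h1 := Finset.card_le_card hsub
      have h2 : (β.erase i₀).card < β.card :=
        Finset.card_erase_lt_of_mem (hγβ i₀ hi₀γ)
      omega
    obtain ⟨i, hi, hge⟩ := ih u' hu'nonneg hu'ne hcard'
    have hiβ : i ∈ β := hu'supp i (ne_of_gt hi)
    exact absurd hge (not_le.mpr (hu'neg i hiβ))

theorem stmt19 {n : ℕ} (hn : 0 < n) (A : Matrix (Fin n) (Fin n) ℝ)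
    (hA : IsSemimonotone A) (z w : Fin n → ℝ)
    (hz : ∀ i, 0 < z i) (hw : ∀ i, 0 < w i) (κ : ℝ)
    (hκ : max (n : ℝ)
        (dotProduct z w /
          (Finset.univ.inf' (Finset.univ_nonempty_iff.mpr (Fin.pos_iff_nonempty.mp hn))
            fun i => z i * w i)) < κ) :
    (fun i => w i * (κ / dotProduct z w - 1 / (z i * w i))) +
      A.transpose.mulVec
        (fun i => z i * (κ / dotProduct z w - 1 / (z i * w i))) ≠ 0 := by
  classical
  intro hr
  set s₀ : ℝ := dotProduct z w with hs₀def
  have hs₀ : 0 < s₀ := by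
    rw [hs₀def]
    unfold dotProduct
    exact Finset.sum_pos (fun i _ => mul_pos (hz i) (hw i))
      ⟨⟨0, hn⟩, Finset.mem_univ _⟩
  set m : ℝ := Finset.univ.inf' (Finset.univ_nonempty_iff.mpr (Fin.pos_iff_nonempty.mp hn))
      fun i => z i * w i with hmdef
  have hm : 0 < m := by
    rw [hmdef, Finset.lt_inf'_iff]
    intro i _
    exact mul_pos (hz i) (hw i)
  have hκ' : s₀ / m < κ := lt_of_le_of_lt (le_max_right _ _) hκ
  have hκpos : 0 < κ := lt_trans (div_pos hs₀ hm) hκ'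
  set t : Fin n → ℝ := fun i => κ / s₀ - 1 / (z i * w i) with htdef
  have ht : ∀ i, 0 < t i := by
    intro i
    have hzw : 0 < z i * w i := mul_pos (hz i) (hw i)
    have hmle : m ≤ z i * w i := Finset.inf'_le _ (Finset.mem_univ i)
    have h1 : s₀ < κ * m := (div_lt_iff₀ hm).mp hκ'
    have h2 : κ * m ≤ κ * (z i * w i) := by nlinarith
    have h3 : (1 : ℝ) / (z i * w i) < κ / s₀ := by
      rw [div_lt_div_iff₀ hzw hs₀]
      nlinarith
    simp only [htdef]
    linarith
  set u : Fin n → ℝ := fun i => z i * t i with hudef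
  have hu0 : 0 ≤ u := fun i => le_of_lt (mul_pos (hz i) (ht i))
  have hune : u ≠ 0 := by
    intro h0
    have := congrFun h0 ⟨0, hn⟩
    simp only [Pi.zero_apply, hudef] at this
    nlinarith [mul_pos (hz ⟨0, hn⟩) (ht ⟨0, hn⟩)]
  obtain ⟨i, hui, hge⟩ := transpose_semi A hA
    (Finset.univ.filter fun i => u i ≠ 0).card u hu0 hune le_rfl
  have hri := congrFun hr i
  simp only [Pi.add_apply, Pi.zero_apply] at hri
  have hwt : 0 < w i * (κ / s₀ - 1 / (z i * w i)) := mul_pos (hw i) (ht i)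
  linarith
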